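/- Suppose the graph G(x, W, L) is disconnected, witnessed by a nonempty proper subset V_1 of V(x) with no edges between V_1 and V(x)∖V_1. Then for every real θ, the signal x_θ = e^{−2πiθ} x_{V_1} + (x − x_{V_1}) has exactly the same STFT magnitude measurements |X_{w_r}(Lm,k)| as x, for all r, m, k. -/

import Mathlib

/-- Multiple-window short-time Fourier transform. -/
noncomputable def stft {N : ℕ} [NeZero N] (L : ℕ) (x w : ZMod N → ℂ) (m k : ℕ) : ℂ :=
  (N : ℂ)⁻¹ * ∑ n : ZMod N, x n * w (((L * m : ℕ) : ZMod N) - n) *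
    Complex.exp (-(2 * Real.pi * Complex.I * (k : ℂ) * (n.val : ℂ)) / (N : ℂ))

/-- If the graph `G(x, W, L)` is disconnected, witnessed by a nonempty proper subset `V₁`
of the support of `x` with no edges between `V₁` and its complement in the support, then
for every real `θ` the signal `x_θ = e^{-2πiθ} x_{V₁} + (x - x_{V₁})` has exactly the same
STFT magnitude measurements as `x`. -/
theorem stmt2 (N L R : ℕ) [NeZero N] (hL : 0 < L) (hdvd : L ∣ N)
    (w : Fin R → ZMod N → ℂ) (x : ZMod N → ℂ) (V1 : Finset (ZMod N))
    (hV1sub : ∀ n ∈ V1, x n ≠ 0) (hV1ne : V1.Nonempty)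
    (hV1prop : ∃ n : ZMod N, x n ≠ 0 ∧ n ∉ V1)
    (hnoedge : ∀ n ∈ V1, ∀ n' : ZMod N, x n' ≠ 0 → n' ∉ V1 →
      ∀ r : Fin R, ∀ m < N / L,
        w r (((L * m : ℕ) : ZMod N) - n') * w r (((L * m : ℕ) : ZMod N) - n) = 0)
    (θ : ℝ) :
    ∀ r : Fin R, ∀ m < N / L, ∀ k < N,
      ‖stft L (fun n => if n ∈ V1 then
          Complex.exp (-(2 * Real.pi * Complex.I * (θ : ℂ))) * x n else x n) (w r) m k‖ =
        ‖stft L x (w r) m k‖ := by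
  intro r m hm k hk
  set c : ℂ := Complex.exp (-(2 * Real.pi * Complex.I * (θ : ℂ))) with hc
  have hcnorm : ‖c‖ = 1 := by
    rw [hc, Complex.norm_exp]
    have : (-(2 * (Real.pi : ℂ) * Complex.I * (θ : ℂ))).re = 0 := by
      simp [Complex.mul_re, Complex.mul_im]
    rw [this, Real.exp_zero]
  by_cases h : ∃ n ∈ V1, w r (((L * m : ℕ) : ZMod N) - n) ≠ 0
  · obtain ⟨n0, hn0, hw0⟩ := h
    have key : ∀ n' : ZMod N, n' ∉ V1 → x n' * w r (((L * m : ℕ) : ZMod N) - n') = 0 := by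
      intro n' hn'
      by_cases hx : x n' = 0
      · simp [hx]
      · rcases mul_eq_zero.mp (hnoedge n0 hn0 n' hx hn' r m hm) with h1 | h1
        · rw [h1, mul_zero]
        · exact absurd h1 hw0
    have heq : stft L (fun n => if n ∈ V1 then c * x n else x n) (w r) m k
        = c * stft L x (w r) m k := by
      simp only [stft]
      have hsum : (∑ n : ZMod N, (if n ∈ V1 then c * x n else x n) *
            w r (((L * m : ℕ) : ZMod N) - n) *
            Complex.exp (-(2 * Real.pi * Complex.I * (k : ℂ) * (n.val : ℂ)) / (N : ℂ)))
          = c * ∑ n : ZMod N, x n * w r (((L * m : ℕ) : ZMod N) - n) *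
            Complex.exp (-(2 * Real.pi * Complex.I * (k : ℂ) * (n.val : ℂ)) / (N : ℂ)) := by
        rw [Finset.mul_sum]
        apply Finset.sum_congr rfl
        intro n _
        by_cases hn : n ∈ V1
        · rw [if_pos hn]; ring
        · rw [if_neg hn, key n hn]
          simp
      rw [hsum]; ring
    rw [heq, norm_mul, hcnorm, one_mul]
  · push_neg at h
    have heq : stft L (fun n => if n ∈ V1 then c * x n else x n) (w r) m k
        = stft L x (w r) m k := by
      simp only [stft]
      congr 1
      apply Finset.sum_congr rfl
      intro n _
      by_cases hn : n ∈ V1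
      · rw [h n hn]; simp
      · simp [if_neg hn]
    rw [heq]
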